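/- Let a > 1 be a real number and let Q be a real polynomial with Q(0) = 0, Q(1) = 1, Q(a) = 0, and Q(x) > 0 for every x with 0 < x < a. Then there exists a natural number N such that for every n ≥ N and every x ∈ [0, a]: Q(x) = x^{2n} if and only if x = 0 or x = 1. -/

import Mathlib

open Polynomial Set Filter Topology

set_option maxHeartbeats 1000000

/-- Let `a > 1` and let `Q` be a real polynomial with `Q(0) = 0`, `Q(1) = 1`,
`Q(a) = 0` and `Q > 0` on `(0, a)`. Then for all sufficiently large `n`, the only
solutions of `Q(x) = x^{2n}` in `[0, a]` are `x = 0` and `x = 1`. -/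
theorem eventually_eq_pow_iff (a : ℝ) (ha : 1 < a) (Q : Polynomial ℝ)
    (h0 : Q.eval 0 = 0) (h1 : Q.eval 1 = 1) (hA : Q.eval a = 0)
    (hpos : ∀ x : ℝ, 0 < x → x < a → 0 < Q.eval x) :
    ∃ N : ℕ, ∀ n : ℕ, N ≤ n → ∀ x ∈ Set.Icc (0 : ℝ) a,
      (Q.eval x = x ^ (2 * n) ↔ x = 0 ∨ x = 1) := by
  have ha0 : (0:ℝ) < a := lt_trans one_pos ha
  have hQne : Q ≠ 0 := fun h => by simp [h] at h1
  -- factorization at 1 : Q = 1 + (x-1) * S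
  obtain ⟨S, hS⟩ : ∃ S : ℝ[X], Q - C 1 = (X - C 1) * S := by
    obtain ⟨S, hS⟩ := (X_sub_C_dvd_sub_C_eval (a := (1:ℝ)) (p := Q))
    exact ⟨S, by rwa [h1] at hS⟩
  have hQx : ∀ x : ℝ, Q.eval x = 1 + (x - 1) * S.eval x := by
    intro x
    have := congrArg (eval x) hS
    simp only [eval_sub, eval_mul, eval_X, eval_C] at this
    linarith
  -- bound on S
  obtain ⟨z, hz, hzmax⟩ := isCompact_Icc.exists_isMaxOn (nonempty_Icc.2 ha0.le)
    ((Polynomial.continuous S).abs.continuousOn (s := Icc 0 a))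
  set Cb : ℝ := max |S.eval z| 1 with hCbdef
  have hCb1 : (1:ℝ) ≤ Cb := le_max_right _ _
  have hCb0 : (0:ℝ) < Cb := lt_of_lt_of_le one_pos hCb1
  have hCb : ∀ x ∈ Icc (0:ℝ) a, |S.eval x| ≤ Cb := fun x hx =>
    (hzmax hx).trans (le_max_left _ _)
  clear_value Cb
  -- factorization at 0 : Q = x^k * R
  set k : ℕ := Q.rootMultiplicity 0 with hkdef
  set R : ℝ[X] := Q /ₘ (X - C 0) ^ k with hRdef
  have hfac : ∀ x : ℝ, Q.eval x = x ^ k * R.eval x := by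
    intro x
    have := congrArg (eval x) (Q.pow_mul_divByMonic_rootMultiplicity_eq 0)
    simp only [eval_mul, eval_pow, eval_sub, eval_X, eval_C, sub_zero] at this
    exact this.symm
  have hk1 : 1 ≤ k := (Polynomial.rootMultiplicity_pos hQne).2 h0
  have hR0 : R.eval 0 ≠ 0 := Polynomial.eval_divByMonic_pow_rootMultiplicity_ne_zero 0 hQne
  clear_value k R
  have hR0pos : 0 < R.eval 0 := by
    rcases hR0.lt_or_gt with hneg | hposR
    · exfalso
      have hev : ∀ᶠ x in 𝓝 (0:ℝ), R.eval x < 0 :=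
        ((Polynomial.continuous R).continuousAt (x := 0)).eventually_lt_const hneg
      obtain ⟨δ, hδ0, hδ⟩ := Metric.eventually_nhds_iff.mp hev
      set x : ℝ := min (δ/2) (1/2) with hxdef
      have hx0 : 0 < x := lt_min (by linarith) (by norm_num)
      have hxa : x < a := lt_of_le_of_lt (min_le_right _ _) (by linarith)
      have hxδ : dist x 0 < δ := by
        rw [Real.dist_eq, sub_zero, abs_of_pos hx0]
        exact lt_of_le_of_lt (min_le_left _ _) (by linarith)
      have hRx : R.eval x < 0 := hδ hxδ
      have hQ := hpos x hx0 hxa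
      rw [hfac x] at hQ
      nlinarith [pow_pos hx0 k, mul_neg_of_pos_of_neg (pow_pos hx0 k) hRx]
    · exact hposR
  -- δ' : near 0 region where R ≥ R(0)/2
  obtain ⟨δ₀, hδ₀0, hδ₀⟩ := Metric.continuousAt_iff.mp
    ((Polynomial.continuous R).continuousAt (x := 0)) (R.eval 0 / 2) (half_pos hR0pos)
  set δ' : ℝ := min (δ₀/2) (1/2) with hδ'def
  have hδ'0 : 0 < δ' := lt_min (by linarith) (by norm_num)
  have hδ'half : δ' ≤ 1/2 := min_le_right _ _
  clear_value δ'
  have hRδ : ∀ x ∈ Icc (0:ℝ) δ', R.eval 0 / 2 ≤ R.eval x := by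
    intro x hx
    have hd : dist x 0 < δ₀ := by
      rw [Real.dist_eq, sub_zero, abs_of_nonneg hx.1]
      have hh : δ' ≤ δ₀/2 := hδ'def ▸ min_le_left _ _
      exact lt_of_le_of_lt (hx.2.trans hh) (by linarith)
    have := hδ₀ hd
    rw [Real.dist_eq] at this
    have := abs_lt.mp this
    linarith [this.1]
  -- ε : near 1 region
  set ε : ℝ := min (1/(2*Cb)) (1/4) with hεdef
  have hε0 : 0 < ε := lt_min (by positivity) (by norm_num)
  have hεq : ε ≤ 1/4 := min_le_right _ _
  have hεC : Cb * ε ≤ 1/2 := by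
    have h := min_le_left (1/(2*Cb)) (1/4)
    have h2 : ε * (2*Cb) ≤ 1 := (le_div_iff₀ (by positivity)).mp h
    nlinarith
  clear_value ε
  -- minimum on middle region
  have hδε : δ' ≤ 1 - ε := by linarith
  obtain ⟨z₀, hz₀, hmin⟩ := isCompact_Icc.exists_isMinOn (nonempty_Icc.2 hδε)
    ((Polynomial.continuous Q).continuousOn (s := Icc δ' (1-ε)))
  set m : ℝ := Q.eval z₀ with hmdef
  have hm0 : 0 < m := hpos z₀ (lt_of_lt_of_le hδ'0 hz₀.1) (lt_of_le_of_lt hz₀.2 (by linarith))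
  clear_value m
  -- choose N
  obtain ⟨N₁, hN₁⟩ := (eventually_atTop).mp
    ((tendsto_pow_atTop_nhds_zero_of_lt_one (r := 1-ε) (by linarith)
      (by linarith)).eventually_lt_const hm0)
  obtain ⟨N₂, hN₂⟩ := (eventually_atTop).mp
    ((tendsto_pow_atTop_nhds_zero_of_lt_one hδ'0.le (by linarith)).eventually_lt_const
      (half_pos hR0pos))
  obtain ⟨N₃, hN₃⟩ := exists_nat_gt Cb
  refine ⟨max (max N₁ N₂) (max N₃ k) + 1, fun n hn x hx => ?_⟩
  obtain ⟨hn₁, hn₂, hn₃, hnk, hn1⟩ : N₁ ≤ n ∧ N₂ ≤ n ∧ N₃ ≤ n ∧ k ≤ n ∧ 1 ≤ n := by omega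
  have hnC : Cb < (n:ℝ) := lt_of_lt_of_le hN₃ (Nat.cast_le.mpr hn₃)
  constructor
  · intro hEq
    by_contra hcon
    push_neg at hcon
    obtain ⟨hx0, hx1⟩ := hcon
    have hxpos : 0 < x := hx.1.lt_of_ne (Ne.symm hx0)
    rcases lt_trichotomy x 1 with hlt | heq | hgt
    · rcases le_or_gt x δ' with hxδ | hδx
      · -- near 0
        have hsplit : x ^ (2*n) = x ^ k * x ^ (2*n - k) := by
          rw [← pow_add]; congr 1; omega
        have hle1 : x ^ (2*n-k) ≤ δ' ^ (2*n-k) := pow_le_pow_left₀ hxpos.le hxδ _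
        have hle2 : δ' ^ (2*n-k) < R.eval 0 / 2 := hN₂ (2*n-k) (by omega)
        have hRx := hRδ x ⟨hx.1, hxδ⟩
        have hQ := hfac x
        have hxk := pow_pos hxpos k
        rw [hEq, hsplit] at hQ
        have hcanc : x ^ (2*n-k) = R.eval x := mul_left_cancel₀ (ne_of_gt hxk) hQ
        linarith
      · rcases le_or_gt x (1-ε) with hxm | hxe
        · -- middle
          have ha1 : x ^ (2*n) ≤ (1-ε) ^ (2*n) := pow_le_pow_left₀ hxpos.le hxm _
          have ha2 : (1-ε) ^ (2*n) < m := hN₁ (2*n) (by omega)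
          have ha3 : m ≤ Q.eval x := by
            have := hmin ⟨hδx.le, hxm⟩
            simpa [hmdef] using this
          rw [hEq] at ha3
          linarith
        · -- near 1, below
          set t : ℝ := 1 - x with htdef
          clear_value t
          have ht0 : 0 < t := by linarith
          have htε : t < ε := by linarith
          have hxp : 0 < x ^ (2*n) := pow_pos hxpos _
          have hber : 1 + (2*(n:ℝ)) * ((1-x)/x) ≤ (1/x) ^ (2*n) := by
            have hnn : (0:ℝ) ≤ (1-x)/x := div_nonneg (by linarith) hxpos.le
            have h := one_add_mul_le_pow (a := (1-x)/x) (by linarith) (2*n)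
            have heq' : 1 + (1-x)/x = 1/x := by field_simp; ring
            rw [heq'] at h
            push_cast at h
            linarith [h]
          have hkey1 : x ^ (2*n) * (1 + 2*(n:ℝ) * t) ≤ 1 := by
            have h2 : t ≤ (1-x)/x := by
              rw [le_div_iff₀ hxpos]; nlinarith
            have h3 : 1 + 2*(n:ℝ) * t ≤ (1/x) ^ (2*n) := by
              refine le_trans ?_ hber
              have hmul := mul_le_mul_of_nonneg_left h2 (show (0:ℝ) ≤ 2*(n:ℝ) by positivity)
              linarith
            calc x ^ (2*n) * (1 + 2*(n:ℝ)*t) ≤ x ^ (2*n) * (1/x) ^ (2*n) :=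
                mul_le_mul_of_nonneg_left h3 hxp.le
              _ = 1 := by rw [← mul_pow, mul_one_div_cancel hxpos.ne', one_pow]
          have hSx := (abs_le.mp (hCb x hx)).2
          have hQlb : 1 - t * Cb ≤ Q.eval x := by
            rw [hQx x]
            have hmul := mul_le_mul_of_nonneg_left hSx ht0.le
            nlinarith
          have hCt : Cb * t ≤ 1/2 :=
            le_trans (mul_le_mul_of_nonneg_left htε.le hCb0.le) hεC
          have hpos2 : (0:ℝ) < 1 + 2*(n:ℝ)*t := by positivity
          have hkey2 : 1 < (1 - t*Cb) * (1 + 2*(n:ℝ)*t) := by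
            have p1 := mul_pos ht0 (sub_pos.2 hnC)
            have p2 := mul_le_mul_of_nonneg_left hCt
              (show (0:ℝ) ≤ 2*(n:ℝ)*t by positivity)
            nlinarith [p1, p2]
          rw [hEq] at hQlb
          have := mul_le_mul_of_nonneg_right hQlb hpos2.le
          linarith
    · exact hx1 heq
    · -- x > 1
      have hber : 1 + (2*(n:ℝ)) * (x-1) ≤ x ^ (2*n) := by
        have h := one_add_mul_le_pow (a := x-1) (by linarith) (2*n)
        have heq' : 1 + (x-1) = x := by ring
        rw [heq'] at h
        push_cast at h
        linarith [h]
      have hSx := (abs_le.mp (hCb x hx)).2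
      have hQeq := hQx x
      rw [hEq] at hQeq
      have p1 := mul_le_mul_of_nonneg_left hSx (show (0:ℝ) ≤ x - 1 by linarith)
      have p2 := mul_lt_mul_of_pos_left hnC (sub_pos.2 hgt)
      have p3 : (0:ℝ) ≤ (x-1) * (n:ℝ) := mul_nonneg (by linarith) (Nat.cast_nonneg n)
      linarith [p1, p2, p3]
  · rintro (rfl | rfl)
    · rw [h0]; exact (zero_pow (by omega)).symm
    · rw [h1, one_pow]
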